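/- The map ρ: ℂ³ → ℝ⁴ given by ρ(z₁,z₂,z₃) = (ν₁, ν₂, ν₃, μ), where ν₁ + iμ = −conj(z₁z₂z₃), ν₂ = ½(|z₂|² − |z₃|²), and ν₃ = −½(|z₁|² − |z₃|²), is T²-invariant, and the induced map from the orbit space ℂ³/T² to ℝ⁴ is a homeomorphism. -/

import Mathlib

/-- The action of `(θ, φ) ∈ T²` on `ℂ³`,
`(e^{iθ}, e^{iφ})·(z₁,z₂,z₃) = (e^{iθ}z₁, e^{iφ}z₂, e^{−i(θ+φ)}z₃)`. -/
noncomputable def torusAct (θ φ : ℝ) (z : ℂ × ℂ × ℂ) : ℂ × ℂ × ℂ :=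
  (Complex.exp (θ * Complex.I) * z.1,
   Complex.exp (φ * Complex.I) * z.2.1,
   Complex.exp (-(θ + φ) * Complex.I) * z.2.2)

/-- The orbit equivalence relation of the `T²`-action on `ℂ³`. -/
noncomputable def torusSetoid : Setoid (ℂ × ℂ × ℂ) where
  r z w := ∃ θ φ : ℝ, w = torusAct θ φ z
  iseqv := by
    constructor
    · exact fun z => ⟨0, 0, by simp [torusAct]⟩
    · rintro z w ⟨θ, φ, rfl⟩
      refine ⟨-θ, -φ, ?_⟩
      refine Prod.ext ?_ (Prod.ext ?_ ?_) <;>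
        · simp only [torusAct, ← mul_assoc, ← Complex.exp_add]
          push_cast
          ring_nf
          simp
    · rintro z w v ⟨θ, φ, rfl⟩ ⟨θ', φ', rfl⟩
      refine ⟨θ + θ', φ + φ', ?_⟩
      refine Prod.ext ?_ (Prod.ext ?_ ?_) <;>
        · simp only [torusAct, ← mul_assoc, ← Complex.exp_add]
          push_cast
          ring_nf

/-- The multi-moment map `ρ = (ν₁, ν₂, ν₃, μ) : ℂ³ → ℝ⁴`, where
`ν₁ + iμ = −conj(z₁z₂z₃)`, `ν₂ = ½(|z₂|² − |z₃|²)`, `ν₃ = −½(|z₁|² − |z₃|²)`. -/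
noncomputable def rhoMap (z : ℂ × ℂ × ℂ) : Fin 4 → ℝ :=
  ![(-(starRingEnd ℂ) (z.1 * z.2.1 * z.2.2)).re,
    (‖z.2.1‖ ^ 2 - ‖z.2.2‖ ^ 2) / 2,
    -(‖z.1‖ ^ 2 - ‖z.2.2‖ ^ 2) / 2,
    (-(starRingEnd ℂ) (z.1 * z.2.1 * z.2.2)).im]

set_option maxHeartbeats 1000000

private lemma rot (a b : ℂ) (h : ‖a‖ = ‖b‖) :
    ∃ ψ : ℝ, Complex.exp (ψ * Complex.I) * a = b := by
  rcases eq_or_ne a 0 with rfl | ha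
  · refine ⟨0, ?_⟩
    have hb : b = 0 := by
      have : ‖b‖ = 0 := by simpa using h.symm
      simpa using this
    simp [hb]
  · refine ⟨(b / a).arg, ?_⟩
    have habs : ‖(b / a)‖ = 1 := by
      rw [norm_div, ← h, div_self]
      simpa using ha
    have h2 := Complex.norm_mul_exp_arg_mul_I (b / a)
    rw [habs] at h2
    simp only [Complex.ofReal_one, one_mul] at h2
    rw [h2]
    field_simp

private lemma cubic_strict {a b t s : ℝ} (ht : 0 ≤ t) (hta : 0 ≤ t + a) (htb : 0 ≤ t + b)
    (hlt : t < s) : t * (t + a) * (t + b) < s * (s + a) * (s + b) := by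
  have hs : 0 < s := lt_of_le_of_lt ht hlt
  have hsa : 0 < s + a := lt_of_le_of_lt hta (by linarith)
  have hsb : 0 < s + b := lt_of_le_of_lt htb (by linarith)
  have p1 : t * (t + a) * (t + b) ≤ s * (t + a) * (t + b) :=
    mul_le_mul_of_nonneg_right (mul_le_mul_of_nonneg_right hlt.le hta) htb
  have p2 : s * (t + a) * (t + b) ≤ s * (s + a) * (t + b) :=
    mul_le_mul_of_nonneg_right (mul_le_mul_of_nonneg_left (by linarith) hs.le) htb
  have p3 : s * (s + a) * (t + b) < s * (s + a) * (s + b) :=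
    mul_lt_mul_of_pos_left (by linarith) (mul_pos hs hsa)
  linarith

private lemma cubic_inj {a b t s : ℝ} (ht : 0 ≤ t) (hta : 0 ≤ t + a) (htb : 0 ≤ t + b)
    (hs : 0 ≤ s) (hsa : 0 ≤ s + a) (hsb : 0 ≤ s + b)
    (h : t * (t + a) * (t + b) = s * (s + a) * (s + b)) : t = s := by
  rcases lt_trichotomy t s with hlt | he | hlt
  · exact absurd h (ne_of_lt (cubic_strict ht hta htb hlt))
  · exact he
  · exact absurd h.symm (ne_of_lt (cubic_strict hs hsa hsb hlt))

private lemma orbit_of_eq (z w : ℂ × ℂ × ℂ)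
    (h1 : ‖z.1‖ = ‖w.1‖)
    (h2 : ‖z.2.1‖ = ‖w.2.1‖)
    (h3 : ‖z.2.2‖ = ‖w.2.2‖)
    (hp : z.1 * z.2.1 * z.2.2 = w.1 * w.2.1 * w.2.2) :
    ∃ θ φ : ℝ, w = torusAct θ φ z := by
  obtain ⟨α, hα⟩ := rot z.1 w.1 h1
  obtain ⟨β, hβ⟩ := rot z.2.1 w.2.1 h2
  obtain ⟨γ, hγ⟩ := rot z.2.2 w.2.2 h3
  rcases eq_or_ne z.1 0 with hz1 | hz1
  · refine ⟨-β - γ, β, ?_⟩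
    have hw1 : w.1 = 0 := by
      have : ‖w.1‖ = 0 := by rw [← h1, hz1]; simp
      simpa using this
    refine Prod.ext ?_ (Prod.ext ?_ ?_)
    · simp [torusAct, hz1, hw1]
    · simpa [torusAct] using hβ.symm
    · show w.2.2 = Complex.exp (-((-β - γ : ℝ) + (β : ℝ)) * Complex.I) * z.2.2
      have : (-(((-β - γ : ℝ) : ℂ) + ((β : ℝ) : ℂ))) = ((γ : ℝ) : ℂ) := by push_cast; ring
      rw [show (-(((-β - γ : ℝ) : ℂ) + ((β : ℝ) : ℂ)) * Complex.I) = ((γ : ℝ) : ℂ) * Complex.I by rw [this]]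
      exact hγ.symm
  rcases eq_or_ne z.2.1 0 with hz2 | hz2
  · refine ⟨α, -α - γ, ?_⟩
    have hw2 : w.2.1 = 0 := by
      have : ‖w.2.1‖ = 0 := by rw [← h2, hz2]; simp
      simpa using this
    refine Prod.ext ?_ (Prod.ext ?_ ?_)
    · simpa [torusAct] using hα.symm
    · simp [torusAct, hz2, hw2]
    · show w.2.2 = Complex.exp (-((α : ℝ) + (-α - γ : ℝ)) * Complex.I) * z.2.2
      rw [show (-(((α : ℝ) : ℂ) + ((-α - γ : ℝ) : ℂ)) * Complex.I) = ((γ : ℝ) : ℂ) * Complex.I by push_cast; ring]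
      exact hγ.symm
  rcases eq_or_ne z.2.2 0 with hz3 | hz3
  · refine ⟨α, β, ?_⟩
    have hw3 : w.2.2 = 0 := by
      have : ‖w.2.2‖ = 0 := by rw [← h3, hz3]; simp
      simpa using this
    refine Prod.ext ?_ (Prod.ext ?_ ?_)
    · simpa [torusAct] using hα.symm
    · simpa [torusAct] using hβ.symm
    · simp [torusAct, hz3, hw3]
  · -- all nonzero
    have hP : z.1 * z.2.1 * z.2.2 ≠ 0 := by
      exact mul_ne_zero (mul_ne_zero hz1 hz2) hz3
    have hkey : Complex.exp (((α : ℝ) : ℂ) * Complex.I + ((β : ℝ) : ℂ) * Complex.I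
        + ((γ : ℝ) : ℂ) * Complex.I) = 1 := by
      have hm : Complex.exp ((α : ℂ) * Complex.I + (β : ℂ) * Complex.I + (γ : ℂ) * Complex.I)
          * (z.1 * z.2.1 * z.2.2) = z.1 * z.2.1 * z.2.2 := by
        rw [Complex.exp_add, Complex.exp_add]
        calc Complex.exp ((α : ℂ) * Complex.I) * Complex.exp ((β : ℂ) * Complex.I)
              * Complex.exp ((γ : ℂ) * Complex.I) * (z.1 * z.2.1 * z.2.2)
            = (Complex.exp ((α : ℂ) * Complex.I) * z.1) * (Complex.exp ((β : ℂ) * Complex.I) * z.2.1)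
              * (Complex.exp ((γ : ℂ) * Complex.I) * z.2.2) := by ring
          _ = w.1 * w.2.1 * w.2.2 := by rw [hα, hβ, hγ]
          _ = z.1 * z.2.1 * z.2.2 := hp.symm
      have := mul_right_cancel₀ hP (hm.trans (one_mul (z.1 * z.2.1 * z.2.2)).symm)
      exact this
    refine ⟨α, β, ?_⟩
    refine Prod.ext ?_ (Prod.ext ?_ ?_)
    · simpa [torusAct] using hα.symm
    · simpa [torusAct] using hβ.symm
    · show w.2.2 = Complex.exp (-((α : ℝ) + (β : ℝ)) * Complex.I) * z.2.2
      have harg : (-(((α : ℝ) : ℂ) + ((β : ℝ) : ℂ)) * Complex.I)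
          = ((γ : ℝ) : ℂ) * Complex.I - ((α : ℂ) * Complex.I + (β : ℂ) * Complex.I + (γ : ℂ) * Complex.I) := by
        push_cast; ring
      rw [harg, Complex.exp_sub, hkey, div_one]
      exact hγ.symm

private lemma rho0 (z : ℂ × ℂ × ℂ) : rhoMap z 0 = -(z.1 * z.2.1 * z.2.2).re := by
  simp [rhoMap]; ring
private lemma rho3 (z : ℂ × ℂ × ℂ) : rhoMap z 3 = (z.1 * z.2.1 * z.2.2).im := by
  simp [rhoMap]; ring
private lemma rho1 (z : ℂ × ℂ × ℂ) :
    rhoMap z 1 = (‖z.2.1‖ ^ 2 - ‖z.2.2‖ ^ 2) / 2 := by simp [rhoMap]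
private lemma rho2 (z : ℂ × ℂ × ℂ) :
    rhoMap z 2 = -(‖z.1‖ ^ 2 - ‖z.2.2‖ ^ 2) / 2 := by simp [rhoMap]


private lemma rho_inj {z w : ℂ × ℂ × ℂ} (h : rhoMap z = rhoMap w) :
    ∃ θ φ : ℝ, w = torusAct θ φ z := by
  have h0 := (rho0 z).symm.trans ((congrFun h 0).trans (rho0 w))
  have h3 := (rho3 z).symm.trans ((congrFun h 3).trans (rho3 w))
  have h1 := (rho1 z).symm.trans ((congrFun h 1).trans (rho1 w))
  have h2 := (rho2 z).symm.trans ((congrFun h 2).trans (rho2 w))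
  have hp : z.1 * z.2.1 * z.2.2 = w.1 * w.2.1 * w.2.2 :=
    Complex.ext (by linarith) h3
  set r1 := ‖z.1‖
  set r2 := ‖z.2.1‖
  set r3 := ‖z.2.2‖
  set s1 := ‖w.1‖
  set s2 := ‖w.2.1‖
  set s3 := ‖w.2.2‖
  have e1 : r1 ^ 2 - r3 ^ 2 = s1 ^ 2 - s3 ^ 2 := by linarith
  have e2 : r2 ^ 2 - r3 ^ 2 = s2 ^ 2 - s3 ^ 2 := by linarith
  have habs : r1 ^ 2 * r2 ^ 2 * r3 ^ 2 = s1 ^ 2 * s2 ^ 2 * s3 ^ 2 := by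
    have := congrArg (fun u => ‖u‖ ^ 2) hp
    simpa [map_mul, mul_pow] using this
  have key : r3 ^ 2 = s3 ^ 2 := by
    refine cubic_inj (a := r1 ^ 2 - r3 ^ 2) (b := r2 ^ 2 - r3 ^ 2)
      (by positivity) (by nlinarith [sq_nonneg r1]) (by nlinarith [sq_nonneg r2])
      (by positivity) (by nlinarith [sq_nonneg s1]) (by nlinarith [sq_nonneg s2]) ?_
    linear_combination habs - s3 ^ 2 * (s3 ^ 2 + r2 ^ 2 - r3 ^ 2) * e1 - s3 ^ 2 * s1 ^ 2 * e2
  have k3 : r3 = s3 := by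
    rw [← Real.sqrt_sq (show (0:ℝ) ≤ r3 from norm_nonneg _),
      ← Real.sqrt_sq (show (0:ℝ) ≤ s3 from norm_nonneg _), key]
  have k1 : r1 = s1 := by
    have hk : r1 ^ 2 = s1 ^ 2 := by linarith
    rw [← Real.sqrt_sq (show (0:ℝ) ≤ r1 from norm_nonneg _),
      ← Real.sqrt_sq (show (0:ℝ) ≤ s1 from norm_nonneg _), hk]
  have k2 : r2 = s2 := by
    have hk : r2 ^ 2 = s2 ^ 2 := by linarith
    rw [← Real.sqrt_sq (show (0:ℝ) ≤ r2 from norm_nonneg _),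
      ← Real.sqrt_sq (show (0:ℝ) ≤ s2 from norm_nonneg _), hk]
  exact orbit_of_eq z w k1 k2 k3 hp

private lemma funext4 {f g : Fin 4 → ℝ} (h0 : f 0 = g 0) (h1 : f 1 = g 1) (h2 : f 2 = g 2)
    (h3 : f 3 = g 3) : f = g := by
  funext i
  fin_cases i <;> assumption


private lemma rho_surj (v : Fin 4 → ℝ) : ∃ z : ℂ × ℂ × ℂ, rhoMap z = v := by
  set a : ℝ := -2 * v 2 with ha
  set b : ℝ := 2 * v 1 with hb
  set c2 : ℝ := v 0 ^ 2 + v 3 ^ 2 with hc2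
  have hc2n : 0 ≤ c2 := by positivity
  set t0 : ℝ := max 0 (max (-a) (-b)) with ht0
  have ht00 : 0 ≤ t0 := le_max_left _ _
  have ht0a : 0 ≤ t0 + a := by
    have := le_trans (le_max_left (-a) (-b)) (le_max_right 0 _)
    linarith
  have ht0b : 0 ≤ t0 + b := by
    have := le_trans (le_max_right (-a) (-b)) (le_max_right 0 _)
    linarith
  have hf0 : t0 * (t0 + a) * (t0 + b) = 0 := by
    rcases le_total (max (-a) (-b)) 0 with h | h
    · have : t0 = 0 := max_eq_left h
      rw [this]; ring
    · have h1 : t0 = max (-a) (-b) := max_eq_right h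
      rcases le_total (-b) (-a) with h' | h'
      · have : t0 = -a := by rw [h1, max_eq_left h']
        rw [this]; ring
      · have : t0 = -b := by rw [h1, max_eq_right h']
        rw [this]; ring
  set T : ℝ := t0 + c2 + 1 with hT
  have hfT : c2 ≤ T * (T + a) * (T + b) := by
    have hA : c2 + 1 ≤ T := by linarith
    have hB : (1:ℝ) ≤ T + a := by simp only [hT]; linarith
    have hC : (1:ℝ) ≤ T + b := by simp only [hT]; linarith
    have p1 : (c2 + 1) * 1 ≤ T * (T + a) :=
      mul_le_mul hA hB (by norm_num) (by linarith)
    have p2 : (c2 + 1) * 1 * 1 ≤ T * (T + a) * (T + b) :=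
      mul_le_mul p1 hC (by norm_num) (by nlinarith)
    nlinarith
  have hcont : ContinuousOn (fun t : ℝ => t * (t + a) * (t + b)) (Set.Icc t0 T) := by
    fun_prop
  have hIVT := intermediate_value_Icc (by linarith : t0 ≤ T) hcont
  have hmem : c2 ∈ Set.Icc ((fun t : ℝ => t * (t + a) * (t + b)) t0)
      ((fun t : ℝ => t * (t + a) * (t + b)) T) := by
    simp only [hf0]
    exact ⟨hc2n, hfT⟩
  obtain ⟨t, htmem, htval⟩ := hIVT hmem
  simp only at htval
  have htt0 : t0 ≤ t := htmem.1
  have htn : 0 ≤ t := le_trans ht00 htt0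
  have hta : 0 ≤ t + a := by linarith
  have htb : 0 ≤ t + b := by linarith
  set r1 : ℝ := Real.sqrt (t + a) with hr1
  set r2 : ℝ := Real.sqrt (t + b) with hr2
  set r3 : ℝ := Real.sqrt t with hr3
  have hr1sq : r1 ^ 2 = t + a := Real.sq_sqrt hta
  have hr2sq : r2 ^ 2 = t + b := Real.sq_sqrt htb
  have hr3sq : r3 ^ 2 = t := Real.sq_sqrt htn
  rcases eq_or_lt_of_le hc2n with hc0 | hcpos
  · -- c2 = 0 : v 0 = 0, v 3 = 0
    have hsum : v 0 ^ 2 + v 3 ^ 2 = 0 := by rw [hc2] at hc0; linarith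
    have hv0 : v 0 = 0 := by
      have h00 : v 0 ^ 2 = 0 := by nlinarith [sq_nonneg (v 0), sq_nonneg (v 3)]
      exact pow_eq_zero_iff (by norm_num : (2:ℕ) ≠ 0) |>.mp h00
    have hv3 : v 3 = 0 := by
      have h00 : v 3 ^ 2 = 0 := by nlinarith [sq_nonneg (v 0), sq_nonneg (v 3)]
      exact pow_eq_zero_iff (by norm_num : (2:ℕ) ≠ 0) |>.mp h00
    refine ⟨((r1 : ℂ), (r2 : ℂ), (r3 : ℂ)), ?_⟩
    have hprod : ((r1 : ℂ) * (r2 : ℂ) * (r3 : ℂ)) = 0 := by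
      have : (r1 * r2 * r3) ^ 2 = 0 := by
        rw [mul_pow, mul_pow, hr1sq, hr2sq, hr3sq]
        rw [← hc0] at htval
        linarith [htval]
      have h0 : r1 * r2 * r3 = 0 := pow_eq_zero_iff (by norm_num : (2:ℕ) ≠ 0) |>.mp this
      rw [show ((r1 : ℂ) * (r2 : ℂ) * (r3 : ℂ)) = ((r1 * r2 * r3 : ℝ) : ℂ) by push_cast; ring,
        h0, Complex.ofReal_zero]
    apply funext4
    · rw [rho0]; simp only [hprod]; simp [hv0]
    · rw [rho1]; simp only [Complex.norm_real, Real.norm_eq_abs, sq_abs]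
      rw [hr2sq, hr3sq, hb]; ring
    · rw [rho2]; simp only [Complex.norm_real, Real.norm_eq_abs, sq_abs]
      rw [hr1sq, hr3sq, ha]; ring
    · rw [rho3]; simp only [hprod]; simp [hv3]
  · -- c2 > 0
    have hfpos : 0 < t * (t + a) * (t + b) := by rw [htval]; exact hcpos
    have htpos : 0 < t := by nlinarith [mul_nonneg hta htb]
    have htapos : 0 < t + a := by nlinarith [mul_nonneg htn htb]
    have htbpos : 0 < t + b := by nlinarith [mul_nonneg htn hta]
    have hr1pos : 0 < r1 := Real.sqrt_pos.mpr htapos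
    have hr2pos : 0 < r2 := Real.sqrt_pos.mpr htbpos
    set p : ℂ := Complex.mk (-(v 0)) (v 3) with hp
    have hpre : p.re = -(v 0) := rfl
    have hpim : p.im = v 3 := rfl
    have hpabs : ‖p‖ ^ 2 = c2 := by
      rw [Complex.sq_norm, Complex.normSq_apply, hpre, hpim, hc2]; ring
    refine ⟨((r1 : ℂ), (r2 : ℂ), p / ((r1 : ℂ) * (r2 : ℂ))), ?_⟩
    have hr12ne : ((r1 : ℂ) * (r2 : ℂ)) ≠ 0 := by
      simp only [ne_eq, mul_eq_zero, Complex.ofReal_eq_zero]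
      push_neg
      exact ⟨ne_of_gt hr1pos, ne_of_gt hr2pos⟩
    have hprod : (r1 : ℂ) * (r2 : ℂ) * (p / ((r1 : ℂ) * (r2 : ℂ))) = p := by
      field_simp
      exact mul_div_cancel_left₀ p hr12ne
    have habs3 : ‖p / ((r1 : ℂ) * (r2 : ℂ))‖ ^ 2 = t := by
      rw [norm_div, norm_mul, Complex.norm_real, Complex.norm_real, Real.norm_eq_abs, Real.norm_eq_abs,
        abs_of_pos hr1pos, abs_of_pos hr2pos, div_pow, mul_pow, hr1sq, hr2sq, hpabs]
      rw [div_eq_iff (by positivity)]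
      linarith [htval]
    apply funext4
    · rw [rho0, hprod, hpre]; ring
    · rw [rho1, habs3]
      simp only [Complex.norm_real, Real.norm_eq_abs, sq_abs, hr2sq]
      rw [hb]; ring
    · rw [rho2, habs3]
      simp only [Complex.norm_real, Real.norm_eq_abs, sq_abs, hr1sq]
      rw [ha]; ring
    · rw [rho3, hprod, hpim]

private lemma rho_normSq (z : ℂ × ℂ × ℂ) :
    rhoMap z 0 ^ 2 + rhoMap z 3 ^ 2 =
      ‖z.1‖ ^ 2 * ‖z.2.1‖ ^ 2 * ‖z.2.2‖ ^ 2 := by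
  rw [rho0, rho3, ← mul_pow, ← mul_pow, ← norm_mul, ← norm_mul, Complex.sq_norm,
    Complex.normSq_apply]
  ring

private lemma rho_bound {M : ℝ} (hM : 0 ≤ M) {z : ℂ × ℂ × ℂ} (h : ∀ i, |rhoMap z i| ≤ M) :
    ‖z‖ ≤ Real.sqrt (2 * M ^ 2 + 4 * M + 1) := by
  set r1 := ‖z.1‖ with hr1
  set r2 := ‖z.2.1‖ with hr2
  set r3 := ‖z.2.2‖ with hr3
  have h1 := abs_le.mp (h 1)
  have h2 := abs_le.mp (h 2)
  have h0 := abs_le.mp (h 0)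
  have h3 := abs_le.mp (h 3)
  rw [rho1] at h1
  rw [rho2] at h2
  have hprod : r1 ^ 2 * r2 ^ 2 * r3 ^ 2 ≤ 2 * M ^ 2 := by
    have := rho_normSq z
    nlinarith [sq_nonneg (rhoMap z 0), sq_nonneg (rhoMap z 3), h0.1, h0.2, h3.1, h3.2]
  have hr1n : 0 ≤ r1 := norm_nonneg _
  have hr2n : 0 ≤ r2 := norm_nonneg _
  have hr3n : 0 ≤ r3 := norm_nonneg _
  have hkey : r3 ^ 2 ≤ 2 * M + 1 + 2 * M ^ 2 := by
    by_contra hcon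
    push_neg at hcon
    have hx1 : 1 + 2 * M ^ 2 < r1 ^ 2 := by linarith
    have hx2 : 1 + 2 * M ^ 2 < r2 ^ 2 := by linarith
    have hx3 : 1 + 2 * M ^ 2 < r3 ^ 2 := by linarith
    have hX : (0:ℝ) < 1 + 2 * M ^ 2 := by positivity
    have q1 : (1 + 2 * M ^ 2) * (1 + 2 * M ^ 2) ≤ r1 ^ 2 * r2 ^ 2 := by nlinarith
    have q2 : (1 + 2 * M ^ 2) * (1 + 2 * M ^ 2) * (1 + 2 * M ^ 2) ≤ r1 ^ 2 * r2 ^ 2 * r3 ^ 2 := by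
      nlinarith [mul_pos hX hX, sq_nonneg r1, sq_nonneg r2]
    nlinarith [sq_nonneg M, sq_nonneg (M ^ 2)]
  have hC1 : r1 ^ 2 ≤ 2 * M ^ 2 + 4 * M + 1 := by linarith
  have hC2 : r2 ^ 2 ≤ 2 * M ^ 2 + 4 * M + 1 := by linarith
  have hC3 : r3 ^ 2 ≤ 2 * M ^ 2 + 4 * M + 1 := by linarith
  have hb1 : r1 ≤ Real.sqrt (2 * M ^ 2 + 4 * M + 1) := by
    rw [show r1 = Real.sqrt (r1 ^ 2) from (Real.sqrt_sq hr1n).symm]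
    exact Real.sqrt_le_sqrt hC1
  have hb2 : r2 ≤ Real.sqrt (2 * M ^ 2 + 4 * M + 1) := by
    rw [show r2 = Real.sqrt (r2 ^ 2) from (Real.sqrt_sq hr2n).symm]
    exact Real.sqrt_le_sqrt hC2
  have hb3 : r3 ≤ Real.sqrt (2 * M ^ 2 + 4 * M + 1) := by
    rw [show r3 = Real.sqrt (r3 ^ 2) from (Real.sqrt_sq hr3n).symm]
    exact Real.sqrt_le_sqrt hC3
  have : ‖z‖ = max (‖z.1‖) (max (‖z.2.1‖) (‖z.2.2‖)) := by
    rw [Prod.norm_def, Prod.norm_def]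
  rw [this]
  exact max_le hb1 (max_le hb2 hb3)


private lemma rho_cont : Continuous rhoMap := by
  have h1 : Continuous fun z : ℂ × ℂ × ℂ => ‖z.1‖ :=
    continuous_norm.comp continuous_fst
  have h2 : Continuous fun z : ℂ × ℂ × ℂ => ‖z.2.1‖ :=
    continuous_norm.comp (continuous_fst.comp continuous_snd)
  have h3 : Continuous fun z : ℂ × ℂ × ℂ => ‖z.2.2‖ :=
    continuous_norm.comp (continuous_snd.comp continuous_snd)
  unfold rhoMap
  apply continuous_pi
  intro i
  fin_cases i <;> simp <;> fun_prop

private lemma rho_proper : IsProperMap rhoMap := by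
  rw [isProperMap_iff_isCompact_preimage]
  refine ⟨rho_cont, fun K hK => ?_⟩
  obtain ⟨M0, hM0⟩ := hK.isBounded.subset_closedBall 0
  set M := max M0 0 with hM
  have hMn : 0 ≤ M := le_max_right _ _
  have hKM : K ⊆ Metric.closedBall 0 M :=
    hM0.trans (Metric.closedBall_subset_closedBall (le_max_left _ _))
  refine (isCompact_closedBall (0 : ℂ × ℂ × ℂ)
    (Real.sqrt (2 * M ^ 2 + 4 * M + 1))).of_isClosed_subset
    (hK.isClosed.preimage rho_cont) ?_
  intro z hz
  have hzK : rhoMap z ∈ Metric.closedBall (0 : Fin 4 → ℝ) M := hKM hz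
  rw [Metric.mem_closedBall, dist_zero_right] at hzK
  have hcomp : ∀ i, |rhoMap z i| ≤ M := fun i =>
    le_trans (by rw [← Real.norm_eq_abs]; exact norm_le_pi_norm (rhoMap z) i) hzK
  rw [Metric.mem_closedBall, dist_zero_right]
  exact rho_bound hMn hcomp

private lemma torus_prod (θ φ : ℝ) (z : ℂ × ℂ × ℂ) :
    (torusAct θ φ z).1 * (torusAct θ φ z).2.1 * (torusAct θ φ z).2.2
      = z.1 * z.2.1 * z.2.2 := by
  show (Complex.exp (θ * Complex.I) * z.1) * (Complex.exp (φ * Complex.I) * z.2.1)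
    * (Complex.exp (-(θ + φ) * Complex.I) * z.2.2) = _
  have : Complex.exp ((θ : ℂ) * Complex.I) * Complex.exp ((φ : ℂ) * Complex.I)
      * Complex.exp (-((θ : ℂ) + (φ : ℂ)) * Complex.I) = 1 := by
    rw [← Complex.exp_add, ← Complex.exp_add, ← Complex.exp_zero]
    congr 1
    push_cast
    ring
  calc (Complex.exp (θ * Complex.I) * z.1) * (Complex.exp (φ * Complex.I) * z.2.1)
      * (Complex.exp (-(θ + φ) * Complex.I) * z.2.2)
      = (Complex.exp ((θ : ℂ) * Complex.I) * Complex.exp ((φ : ℂ) * Complex.I)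
        * Complex.exp (-((θ : ℂ) + (φ : ℂ)) * Complex.I)) * (z.1 * z.2.1 * z.2.2) := by ring
    _ = z.1 * z.2.1 * z.2.2 := by rw [this, one_mul]

private lemma rho_invariant (θ φ : ℝ) (z : ℂ × ℂ × ℂ) :
    rhoMap (torusAct θ φ z) = rhoMap z := by
  have hp := torus_prod θ φ z
  have ha1 : ‖(torusAct θ φ z).1‖ = ‖z.1‖ := by
    simp [torusAct, map_mul, Complex.norm_exp_ofReal_mul_I]
  have ha2 : ‖(torusAct θ φ z).2.1‖ = ‖z.2.1‖ := by
    simp [torusAct, map_mul, Complex.norm_exp_ofReal_mul_I]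
  have ha3 : ‖(torusAct θ φ z).2.2‖ = ‖z.2.2‖ := by
    simp only [torusAct, norm_mul]
    rw [show (-((θ : ℂ) + (φ : ℂ)) * Complex.I) = (((-(θ + φ) : ℝ) : ℂ) * Complex.I) by
      push_cast; ring, Complex.norm_exp_ofReal_mul_I, one_mul]
  unfold rhoMap
  rw [hp, ha1, ha2, ha3]


/-- `ρ` is `T²`-invariant and induces a homeomorphism `ℂ³/T² → ℝ⁴`. -/
theorem rho_invariant_and_induces_homeomorph :
    (∀ (θ φ : ℝ) (z : ℂ × ℂ × ℂ), rhoMap (torusAct θ φ z) = rhoMap z) ∧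
    ∃ h : Quotient torusSetoid ≃ₜ (Fin 4 → ℝ),
      ∀ z : ℂ × ℂ × ℂ, h (Quotient.mk torusSetoid z) = rhoMap z := by
  refine ⟨rho_invariant, ?_⟩
  have hinv : ∀ a b : ℂ × ℂ × ℂ, torusSetoid.r a b → rhoMap a = rhoMap b := by
    rintro a b ⟨θ, φ, rfl⟩
    exact (rho_invariant θ φ a).symm
  set F : Quotient torusSetoid → (Fin 4 → ℝ) := Quotient.lift rhoMap hinv with hF
  have hFmk : ∀ z : ℂ × ℂ × ℂ, F (Quotient.mk torusSetoid z) = rhoMap z := fun z => rfl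
  have hFcont : Continuous F := rho_cont.quotient_lift hinv
  have hFbij : Function.Bijective F := by
    constructor
    · intro x y
      refine Quotient.inductionOn₂ x y ?_
      intro z w h
      rw [hFmk, hFmk] at h
      exact Quotient.sound (rho_inj h)
    · intro v
      obtain ⟨z, hz⟩ := rho_surj v
      exact ⟨Quotient.mk torusSetoid z, hz⟩
  have hFclosed : IsClosedMap F := by
    intro C hC
    have hCeq : F '' C = rhoMap '' (Quotient.mk torusSetoid ⁻¹' C) := by
      conv_lhs => rw [← Set.image_preimage_eq C (fun q => Quotient.inductionOn q fun z => ⟨z, rfl⟩)]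
      rw [← Set.image_comp]
      rfl
    rw [hCeq]
    exact rho_proper.isClosedMap _ (hC.preimage continuous_quotient_mk')
  have hFopen : IsOpenMap F := by
    intro U hU
    have : F '' U = (F '' Uᶜ)ᶜ := by
      rw [Set.image_compl_eq hFbij, compl_compl]
    rw [this]
    exact (hFclosed _ hU.isClosed_compl).isOpen_compl
  exact ⟨Equiv.toHomeomorphOfContinuousOpen (Equiv.ofBijective F hFbij) hFcont hFopen,
    fun z => rfl⟩
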